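/- The map Hy_N and the map g ↦ Σ_{m ∈ C_N} g(m)·1_{A_m} are mutually inverse up to I_N: for every g ∈ L(C_N), Hy_N(Σ_{m ∈ C_N} g(m)·1_{A_m}) = g, and for every f ∈ L(X^N), Σ_{m ∈ C_N} Hy_N(f)(m)·1_{A_m} − f ∈ I_N. Consequently the induced map [f] ↦ Hy_N(f) is a linear bijection from the quotient space L(X^N)/I_N onto L(C_N). -/

import Mathlib

namespace ExchPaper

/-- The lift of a permutation `σ` of `{1,…,N}` to gambles on `X^N`: `(σ^t f)(x) = f(σx)`. -/
def lift {X : Type*} (N : ℕ) (σ : Equiv.Perm (Fin N)) (f : (Fin N → X) → ℝ) :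
    (Fin N → X) → ℝ :=
  fun x => f (fun k => x (σ k))
/-- `I_N`: the linear span of `{f − σ^t f : f ∈ L(X^N), σ a permutation of {1,…,N}}`. -/
def IN (X : Type*) (N : ℕ) : Submodule ℝ ((Fin N → X) → ℝ) :=
  Submodule.span ℝ
    {g | ∃ (f : (Fin N → X) → ℝ) (σ : Equiv.Perm (Fin N)), g = f - lift N σ f}
/-- The count vector `T(x)` of a sequence `x ∈ X^N`: `T(x)_z = #{k : x_k = z}`. -/
def countVec {X : Type*} [Fintype X] [DecidableEq X] (N : ℕ) (x : Fin N → X) : X → ℕ :=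
  fun z => (Finset.univ.filter (fun k => x k = z)).card

/-- The set of count vectors `C_N = {m ∈ ℕ^X : Σ_z m_z = N}`. -/
def CNset (X : Type*) [Fintype X] (N : ℕ) : Set (X → ℕ) :=
  {m | ∑ z, m z = N}

lemma CNset_finite (X : Type*) [Fintype X] (N : ℕ) : (CNset X N).Finite := by
  apply Set.Finite.subset (Set.Finite.pi (fun _ : X => Set.finite_Iic N))
  intro m hm
  simp only [Set.mem_pi, Set.mem_univ, Set.mem_Iic, forall_true_left]
  intro z
  calc m z ≤ ∑ w, m w := Finset.single_le_sum (fun i _ => Nat.zero_le (m i)) (Finset.mem_univ z)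
  _ = N := hm

noncomputable instance (X : Type*) [Fintype X] (N : ℕ) : Fintype (CNset X N) :=
  (CNset_finite X N).fintype

/-- The permutation invariant atom `A_m = {x ∈ X^N : T(x) = m}`. -/
def atom {X : Type*} [Fintype X] [DecidableEq X] (N : ℕ) (m : X → ℕ) : Finset (Fin N → X) :=
  Finset.univ.filter (fun x => countVec N x = m)

/-- `Hy_N(f)(m) = (1/|A_m|) Σ_{y ∈ A_m} f(y)`. -/
noncomputable def Hy {X : Type*} [Fintype X] [DecidableEq X] (N : ℕ)
    (f : (Fin N → X) → ℝ) (m : X → ℕ) : ℝ :=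
  (1 / ((atom N m).card : ℝ)) * ∑ y ∈ atom N m, f y

/-- `Hy_N(f)` as a gamble on `C_N`. -/
noncomputable def HyFun {X : Type*} [Fintype X] [DecidableEq X] (N : ℕ)
    (f : (Fin N → X) → ℝ) : CNset X N → ℝ :=
  fun m => Hy N f m.1

section Aux

variable {X : Type*} [Fintype X] [DecidableEq X]

lemma count_ofFn {N : ℕ} (x : Fin N → X) (z : X) :
    (List.ofFn x).count z = countVec N x z := by
  induction N with
  | zero => simp [countVec]
  | succ n ih =>
      rw [List.ofFn_succ, List.count_cons, ih (fun i => x i.succ)]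
      unfold countVec
      rw [Finset.card_filter, Finset.card_filter, Fin.sum_univ_succ]
      simp [add_comm]

lemma countVec_comp {N : ℕ} (x : Fin N → X) (σ : Equiv.Perm (Fin N)) :
    countVec N (fun k => x (σ k)) = countVec N x := by
  funext z
  rw [← count_ofFn, ← count_ofFn]
  exact (Equiv.Perm.ofFn_comp_perm σ x).count_eq z

lemma countVec_castSucc {n : ℕ} (x : Fin (n + 1) → X) (z : X) :
    countVec (n + 1) x z
      = countVec n (fun i => x i.castSucc) z + (if x (Fin.last n) = z then 1 else 0) := by
  rw [← count_ofFn, ← count_ofFn, List.ofFn_succ']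
  simp [List.count_concat, List.count_singleton']

lemma exists_perm : ∀ {N : ℕ} {x y : Fin N → X}, countVec N x = countVec N y →
    ∃ σ : Equiv.Perm (Fin N), (fun k => x (σ k)) = y := by
  intro N
  induction N with
  | zero => exact fun _ => ⟨1, funext fun k => k.elim0⟩
  | succ n ih =>
      intro x y h
      set z := y (Fin.last n) with hz
      have hposy : 0 < countVec (n + 1) y z := by
        apply Finset.card_pos.2 ⟨Fin.last n, by simp [hz]⟩
      have hposx : 0 < countVec (n + 1) x z := by rw [h]; exact hposy
      obtain ⟨j, hj⟩ : ∃ j, x j = z := by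
        obtain ⟨j, hj⟩ := Finset.card_pos.1 hposx
        exact ⟨j, (Finset.mem_filter.1 hj).2⟩
      set τ : Equiv.Perm (Fin (n + 1)) := Equiv.swap j (Fin.last n) with hτ
      set x₁ : Fin (n + 1) → X := fun k => x (τ k) with hx₁
      have hx₁c : countVec (n + 1) x₁ = countVec (n + 1) y := by
        rw [hx₁, countVec_comp, h]
      have hx₁last : x₁ (Fin.last n) = z := by
        simp [hx₁, hτ, Equiv.swap_apply_right, hj]
      have hrest : countVec n (fun i => x₁ i.castSucc) = countVec n (fun i => y i.castSucc) := by
        funext w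
        have h1 := countVec_castSucc x₁ w
        have h2 := countVec_castSucc y w
        have := congrFun hx₁c w
        rw [h1, h2, hx₁last, ← hz] at this
        omega
      obtain ⟨σ', hσ'⟩ := ih hrest
      set σext : Equiv.Perm (Fin (n + 1)) :=
        (Equiv.permCongr finSuccEquivLast).symm (Equiv.optionCongr σ') with hσext
      refine ⟨σext.trans τ, funext fun k => ?_⟩
      show x (τ (σext k)) = y k
      refine Fin.lastCases ?_ (fun i => ?_) k
      · have : σext (Fin.last n) = Fin.last n := by
          simp [hσext, Equiv.permCongr_apply]
        rw [this]
        show x₁ (Fin.last n) = y (Fin.last n)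
        rw [hx₁last, hz]
      · have : σext i.castSucc = (σ' i).castSucc := by
          simp [hσext, Equiv.permCongr_apply]
        rw [this]
        exact congrFun hσ' i

lemma countVec_mem_CNset {N : ℕ} (x : Fin N → X) : countVec N x ∈ CNset X N := by
  show ∑ z, countVec N x z = N
  unfold countVec
  rw [← Finset.card_eq_sum_card_fiberwise (f := x) (t := Finset.univ)
      (fun k _ => Finset.mem_univ _)]
  simp

lemma exists_countVec_eq {N : ℕ} {m : X → ℕ} (hm : m ∈ CNset X N) :
    ∃ x : Fin N → X, countVec N x = m := by
  classical
  set M : Multiset X := ∑ z : X, (m z) • ({z} : Multiset X) with hM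
  have hcount : ∀ w, M.count w = m w := by
    intro w
    rw [hM, Multiset.count_sum']
    rw [Finset.sum_eq_single w]
    · simp
    · intro b _ hb
      simp [Multiset.count_singleton, Ne.symm hb]
    · simp
  have hcard : Multiset.card M = N := by
    rw [hM, Multiset.card_sum]
    simpa [CNset] using hm
  set l := M.toList with hl
  have hlen : l.length = N := by rw [hl, Multiset.length_toList, hcard]
  refine ⟨fun k => l.get (Fin.cast hlen.symm k), ?_⟩
  funext w
  have hofn : List.ofFn (fun k : Fin N => l.get (Fin.cast hlen.symm k)) = l := by
    subst hlen
    simp [List.ofFn_get]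
  rw [← count_ofFn, hofn, ← hcount w, ← Multiset.coe_toList M, hl]
  exact (Multiset.coe_count w _).symm

lemma mem_atom_iff {N : ℕ} {x : Fin N → X} {m : X → ℕ} :
    x ∈ atom N m ↔ countVec N x = m := by
  simp [atom]

/-- collapse the indicator sum. -/
lemma sum_indicator {N : ℕ} (h : CNset X N → ℝ) (x : Fin N → X) :
    ∑ m : CNset X N, h m * (if x ∈ atom N m.1 then (1 : ℝ) else 0)
      = h ⟨countVec N x, countVec_mem_CNset x⟩ := by
  rw [Finset.sum_eq_single (⟨countVec N x, countVec_mem_CNset x⟩ : CNset X N)]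
  · simp [mem_atom_iff]
  · intro b _ hb
    have : ¬ (x ∈ atom N b.1) := by
      rw [mem_atom_iff]
      intro hc
      exact hb (Subtype.ext hc.symm)
    simp [this]
  · intro hc
    exact absurd (Finset.mem_univ _) hc

/-- averaging over all permutations equals averaging over the atom. -/
lemma avg_perm_eq_Hy {N : ℕ} (f : (Fin N → X) → ℝ) (x : Fin N → X) :
    (1 / ((Nat.factorial N : ℕ) : ℝ)) * ∑ σ : Equiv.Perm (Fin N), f (fun k => x (σ k))
      = Hy N f (countVec N x) := by
  classical
  set A := atom N (countVec N x) with hA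
  set c := (Finset.univ.filter
      (fun σ : Equiv.Perm (Fin N) => (fun k => x (σ k)) = x)).card with hc
  have hmaps : ∀ σ : Equiv.Perm (Fin N), σ ∈ Finset.univ →
      (fun k => x (σ k)) ∈ A := fun σ _ => mem_atom_iff.2 (countVec_comp x σ)
  have hfiber : ∀ y ∈ A, (Finset.univ.filter
      (fun σ : Equiv.Perm (Fin N) => (fun k => x (σ k)) = y)).card = c := by
    intro y hy
    obtain ⟨σ₀, hσ₀⟩ := exists_perm (mem_atom_iff.1 hy).symm
    -- fiber over y ≃ stabilizer, via σ ↦ σ₀.symm.trans σ  (k ↦ σ (σ₀.symm k))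
    apply Finset.card_bij' (fun σ _ => σ₀.symm.trans σ) (fun τ _ => σ₀.trans τ)
    · intro σ hσ
      simp only [Finset.mem_filter, Finset.mem_univ, true_and] at hσ ⊢
      funext k
      show x (σ (σ₀.symm k)) = x k
      rw [congrFun hσ (σ₀.symm k)]
      have := congrFun hσ₀ (σ₀.symm k)
      simpa using this.symm
    · intro τ hτ
      simp only [Finset.mem_filter, Finset.mem_univ, true_and] at hτ ⊢
      funext k
      show x (τ (σ₀ k)) = y k
      rw [congrFun hτ (σ₀ k)]
      exact congrFun hσ₀ k
    · intro σ _; ext k; simp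
    · intro τ _; ext k; simp
  have hsum : ∀ g : (Fin N → X) → ℝ,
      ∑ σ : Equiv.Perm (Fin N), g (fun k => x (σ k)) = ∑ y ∈ A, (c : ℝ) * g y := by
    intro g
    rw [← Finset.sum_fiberwise_of_maps_to hmaps (fun σ => g (fun k => x (σ k)))]
    apply Finset.sum_congr rfl
    intro y hy
    have : ∀ σ ∈ Finset.univ.filter
        (fun σ : Equiv.Perm (Fin N) => (fun k => x (σ k)) = y),
        g (fun k => x (σ k)) = g y := by
      intro σ hσ
      rw [(Finset.mem_filter.1 hσ).2]
    rw [Finset.sum_congr rfl this, Finset.sum_const, hfiber y hy]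
    simp [mul_comm]
  have hcard : ((Nat.factorial N : ℕ) : ℝ) = (c : ℝ) * (A.card : ℝ) := by
    have h1 := hsum (fun _ => (1 : ℝ))
    simp only [Finset.sum_const, nsmul_eq_mul, mul_one] at h1
    rw [Finset.card_univ, Fintype.card_perm, Fintype.card_fin, mul_comm] at h1
    exact_mod_cast h1
  have hcpos : 0 < c := by
    apply Finset.card_pos.2
    exact ⟨Equiv.refl _, by simp⟩
  have hApos : 0 < A.card := Finset.card_pos.2 ⟨x, mem_atom_iff.2 rfl⟩
  rw [hsum f, ← Finset.mul_sum]
  unfold Hy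
  rw [← hA, hcard]
  have hc0 : (c : ℝ) ≠ 0 := by positivity
  have hA0 : (A.card : ℝ) ≠ 0 := by positivity
  field_simp

end Aux

/-- `Hy` as a linear map. -/
noncomputable def HyL (X : Type*) [Fintype X] [DecidableEq X] (N : ℕ) :
    ((Fin N → X) → ℝ) →ₗ[ℝ] (CNset X N → ℝ) where
  toFun f := HyFun N f
  map_add' f g := by
    funext m
    simp [HyFun, Hy, Finset.sum_add_distrib, mul_add]
  map_smul' r f := by
    funext m
    simp only [HyFun, Hy, RingHom.id_apply, Pi.smul_apply, smul_eq_mul, ← Finset.mul_sum]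
    ring

theorem statement_7 (X : Type*) [Fintype X] [DecidableEq X] [Nonempty X] (N : ℕ) (hN : 0 < N) :
    (∀ g : CNset X N → ℝ,
        HyFun N (fun x => ∑ m : CNset X N, g m * (if x ∈ atom N m.1 then (1 : ℝ) else 0)) = g) ∧
    (∀ f : (Fin N → X) → ℝ,
        (fun x => ∑ m : CNset X N, Hy N f m.1 * (if x ∈ atom N m.1 then (1 : ℝ) else 0)) - f
          ∈ IN X N) ∧
    (∃ e : (((Fin N → X) → ℝ) ⧸ IN X N) ≃ₗ[ℝ] (CNset X N → ℝ),
        ∀ f : (Fin N → X) → ℝ, e (Submodule.Quotient.mk f) = HyFun N f) := by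
  classical
  -- Part 1
  have part1 : ∀ g : CNset X N → ℝ,
      HyFun N (fun x => ∑ m : CNset X N, g m * (if x ∈ atom N m.1 then (1 : ℝ) else 0)) = g := by
    intro g
    funext m
    obtain ⟨x₀, hx₀⟩ := exists_countVec_eq m.2
    have hApos : 0 < (atom N m.1).card := Finset.card_pos.2 ⟨x₀, mem_atom_iff.2 hx₀⟩
    show Hy N _ m.1 = g m
    unfold Hy
    have hterm : ∀ y ∈ atom N m.1,
        (∑ m' : CNset X N, g m' * (if y ∈ atom N m'.1 then (1 : ℝ) else 0)) = g m := by
      intro y hy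
      rw [sum_indicator g y]
      congr 1
      exact Subtype.ext (mem_atom_iff.1 hy)
    rw [Finset.sum_congr rfl hterm, Finset.sum_const]
    have hA0 : ((atom N m.1).card : ℝ) ≠ 0 := by positivity
    simp only [nsmul_eq_mul]
    field_simp
  -- Part 2
  have part2 : ∀ f : (Fin N → X) → ℝ,
      (fun x => ∑ m : CNset X N, Hy N f m.1 * (if x ∈ atom N m.1 then (1 : ℝ) else 0)) - f
        ∈ IN X N := by
    intro f
    have key : (fun x => ∑ m : CNset X N, Hy N f m.1 * (if x ∈ atom N m.1 then (1 : ℝ) else 0))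
          - f
        = (1 / ((Nat.factorial N : ℕ) : ℝ)) • ∑ σ : Equiv.Perm (Fin N), (lift N σ f - f) := by
      funext x
      have hfact : ((Nat.factorial N : ℕ) : ℝ) ≠ 0 := by positivity
      have havg := avg_perm_eq_Hy f x
      have hind := sum_indicator (fun m : CNset X N => Hy N f m.1) x
      simp only [Pi.sub_apply, Pi.smul_apply, Finset.sum_apply, smul_eq_mul]
      rw [hind]
      show Hy N f (countVec N x) - f x
        = 1 / ((Nat.factorial N : ℕ) : ℝ) * ∑ σ : Equiv.Perm (Fin N), (lift N σ f x - f x)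
      rw [Finset.sum_sub_distrib, Finset.sum_const, Finset.card_univ, Fintype.card_perm,
        Fintype.card_fin, mul_sub, ← havg]
      unfold lift
      simp only [nsmul_eq_mul]
      field_simp
    rw [key]
    apply Submodule.smul_mem
    apply Submodule.sum_mem
    intro σ _
    have : lift N σ f - f = -(f - lift N σ f) := by ring
    rw [this]
    exact Submodule.neg_mem _ (Submodule.subset_span ⟨f, σ, rfl⟩)
  refine ⟨part1, part2, ?_⟩
  -- Part 3
  have hker : IN X N ≤ LinearMap.ker (HyL X N) := by
    rw [IN, Submodule.span_le]
    rintro _ ⟨f, σ, rfl⟩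
    rw [SetLike.mem_coe, LinearMap.mem_ker, map_sub]
    have : HyL X N (lift N σ f) = HyL X N f := by
      show HyFun N (lift N σ f) = HyFun N f
      funext m
      show Hy N (lift N σ f) m.1 = Hy N f m.1
      unfold Hy
      congr 1
      apply Finset.sum_nbij' (fun y => fun k => y (σ k)) (fun y => fun k => y (σ.symm k))
      · intro y hy
        rw [mem_atom_iff] at hy ⊢
        rw [countVec_comp, hy]
      · intro y hy
        rw [mem_atom_iff] at hy ⊢
        rw [countVec_comp, hy]
      · intro y _; funext k; simp
      · intro y _; funext k; simp
      · intro y _; rfl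
    rw [this, sub_self]
  set e₀ : (((Fin N → X) → ℝ) ⧸ IN X N) →ₗ[ℝ] (CNset X N → ℝ) :=
    Submodule.liftQ (IN X N) (HyL X N) hker with he₀
  have hbij : Function.Bijective e₀ := by
    constructor
    · rw [← LinearMap.ker_eq_bot, he₀]
      apply Submodule.ker_liftQ_eq_bot _ _ hker
      intro f hf
      rw [LinearMap.mem_ker] at hf
      have hf' : ∀ m : CNset X N, Hy N f m.1 = 0 := fun m => congrFun hf m
      have h2 := part2 f
      have hzero : (fun x => ∑ m : CNset X N,
          Hy N f m.1 * (if x ∈ atom N m.1 then (1 : ℝ) else 0)) = 0 := by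
        funext x
        simp only [hf', zero_mul, Finset.sum_const_zero]
        rfl
      rw [hzero, zero_sub] at h2
      simpa using (IN X N).neg_mem h2
    · intro g
      refine ⟨Submodule.Quotient.mk
        (fun x => ∑ m : CNset X N, g m * (if x ∈ atom N m.1 then (1 : ℝ) else 0)), ?_⟩
      show HyFun N _ = g
      exact part1 g
  refine ⟨LinearEquiv.ofBijective e₀ hbij, fun f => ?_⟩
  rfl

end ExchPaper
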